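/- Let S1 and S2 be finite presemifields of characteristic p with spread sets C1 and C2, and suppose (g1,g2,g3) is an isotopism between S1 and S2. Then: (1) N_r(C2) = g3 ∘ N_r(C1) ∘ g3⁻¹ := {g3∘μ∘g3⁻¹ : μ ∈ N_r(C1)}; (2) N_m(C2) = g1 ∘ N_m(C1) ∘ g1⁻¹; (3) N_r(C2^d) = g3 ∘ N_r(C1^d) ∘ g3⁻¹, where C1^d, C2^d are the spread sets of the dual presemifields. -/
import Mathlib


/-- A finite presemifield of characteristic `p`: a (nontrivial, finite) `ZMod p`-vector
space equipped with a multiplication that is additive (equivalently, `ZMod p`-linear)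
in each argument and has no zero divisors.  For `y : S`, the map `mul.flip y` is the
right-multiplication map `φ_y : x ↦ x ⋆ y`, so the spread set is `Set.range mul.flip`. -/
structure Presemifield (p : ℕ) (S : Type*) [AddCommGroup S] [Module (ZMod p) S] where
  mul : S →ₗ[ZMod p] S →ₗ[ZMod p] S
  eq_zero_or_eq_zero : ∀ x y : S, mul x y = 0 → x = 0 ∨ y = 0

/-- The spread set `C = {φ_y : y ∈ S}` of a presemifield. -/
def Presemifield.spread {p : ℕ} {S : Type*} [AddCommGroup S] [Module (ZMod p) S]
    (M : Presemifield p S) : Set (S →ₗ[ZMod p] S) :=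
  Set.range M.mul.flip

/-- The spread set `C^d = {φ^x : x ∈ S}` of the dual presemifield (`x ⋆^d y = y ⋆ x`). -/
def Presemifield.dualSpread {p : ℕ} {S : Type*} [AddCommGroup S] [Module (ZMod p) S]
    (M : Presemifield p S) : Set (S →ₗ[ZMod p] S) :=
  Set.range M.mul

/-- The right-nucleus set `N_r(D) = {μ : μ∘φ ∈ D for all φ ∈ D}`. -/
def rightNucleusSet {p : ℕ} {S : Type*} [AddCommGroup S] [Module (ZMod p) S]
    (D : Set (S →ₗ[ZMod p] S)) : Set (S →ₗ[ZMod p] S) :=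
  {μ | ∀ φ ∈ D, μ ∘ₗ φ ∈ D}

/-- The middle-nucleus set `N_m(D) = {μ : φ∘μ ∈ D for all φ ∈ D}`. -/
def middleNucleusSet {p : ℕ} {S : Type*} [AddCommGroup S] [Module (ZMod p) S]
    (D : Set (S →ₗ[ZMod p] S)) : Set (S →ₗ[ZMod p] S) :=
  {μ | ∀ φ ∈ D, φ ∘ₗ μ ∈ D}

section Aux

variable {p : ℕ} {S1 S2 : Type*} [AddCommGroup S1] [Module (ZMod p) S1]
  [AddCommGroup S2] [Module (ZMod p) S2]

private lemma aux_cancel (A : S1 ≃ₗ[ZMod p] S2) (B : S2 ≃ₗ[ZMod p] S1)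
    {f g : S1 →ₗ[ZMod p] S1}
    (h : (A : S1 →ₗ[ZMod p] S2) ∘ₗ f ∘ₗ (B : S2 →ₗ[ZMod p] S1)
        = (A : S1 →ₗ[ZMod p] S2) ∘ₗ g ∘ₗ (B : S2 →ₗ[ZMod p] S1)) : f = g := by
  ext x
  have := LinearMap.congr_fun h (B.symm x)
  simp only [LinearMap.comp_apply, LinearEquiv.coe_coe, LinearEquiv.apply_symm_apply] at this
  exact A.injective this

private lemma rightNucleusSet_conj (A : S1 ≃ₗ[ZMod p] S2) (B : S2 ≃ₗ[ZMod p] S1)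
    (D : Set (S1 →ₗ[ZMod p] S1)) :
    rightNucleusSet
        ((fun φ => (A : S1 →ₗ[ZMod p] S2) ∘ₗ φ ∘ₗ (B : S2 →ₗ[ZMod p] S1)) '' D)
      = (fun μ : S1 →ₗ[ZMod p] S1 =>
          (A : S1 →ₗ[ZMod p] S2) ∘ₗ μ ∘ₗ (A.symm : S2 →ₗ[ZMod p] S1)) ''
        rightNucleusSet D := by
  ext μ
  constructor
  · intro h
    refine ⟨(A.symm : S2 →ₗ[ZMod p] S1) ∘ₗ μ ∘ₗ (A : S1 →ₗ[ZMod p] S2), ?_, ?_⟩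
    · intro φ hφ
      obtain ⟨ψ, hψ, hEq⟩ := h _ ⟨φ, hφ, rfl⟩
      have : (((A.symm : S2 →ₗ[ZMod p] S1) ∘ₗ μ ∘ₗ (A : S1 →ₗ[ZMod p] S2)) ∘ₗ φ) = ψ := by
        apply aux_cancel A B
        ext x
        have h2 := LinearMap.congr_fun hEq x
        simp only [LinearMap.comp_apply, LinearEquiv.coe_coe,
          LinearEquiv.apply_symm_apply, LinearEquiv.symm_apply_apply] at h2 ⊢
        exact h2.symm
      rw [this]; exact hψ
    · ext x; simp [LinearMap.comp_apply]
  · rintro ⟨ν, hν, rfl⟩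
    rintro φ ⟨ψ, hψ, rfl⟩
    refine ⟨ν ∘ₗ ψ, hν ψ hψ, ?_⟩
    ext x; simp [LinearMap.comp_apply]

private lemma middleNucleusSet_conj (A : S1 ≃ₗ[ZMod p] S2) (B : S2 ≃ₗ[ZMod p] S1)
    (D : Set (S1 →ₗ[ZMod p] S1)) :
    middleNucleusSet
        ((fun φ => (A : S1 →ₗ[ZMod p] S2) ∘ₗ φ ∘ₗ (B : S2 →ₗ[ZMod p] S1)) '' D)
      = (fun μ : S1 →ₗ[ZMod p] S1 =>
          (B.symm : S1 →ₗ[ZMod p] S2) ∘ₗ μ ∘ₗ (B : S2 →ₗ[ZMod p] S1)) ''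
        middleNucleusSet D := by
  ext μ
  constructor
  · intro h
    refine ⟨(B : S2 →ₗ[ZMod p] S1) ∘ₗ μ ∘ₗ (B.symm : S1 →ₗ[ZMod p] S2), ?_, ?_⟩
    · intro φ hφ
      obtain ⟨ψ, hψ, hEq⟩ := h _ ⟨φ, hφ, rfl⟩
      have : (φ ∘ₗ ((B : S2 →ₗ[ZMod p] S1) ∘ₗ μ ∘ₗ (B.symm : S1 →ₗ[ZMod p] S2))) = ψ := by
        apply aux_cancel A B
        ext x
        have h2 := LinearMap.congr_fun hEq x
        simp only [LinearMap.comp_apply, LinearEquiv.coe_coe,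
          LinearEquiv.apply_symm_apply, LinearEquiv.symm_apply_apply] at h2 ⊢
        exact h2.symm
      rw [this]; exact hψ
    · ext x; simp [LinearMap.comp_apply]
  · rintro ⟨ν, hν, rfl⟩
    rintro φ ⟨ψ, hψ, rfl⟩
    refine ⟨ψ ∘ₗ ν, hν ψ hψ, ?_⟩
    ext x; simp [LinearMap.comp_apply]

end Aux

theorem statement5 (p : ℕ) [Fact p.Prime]
    (S1 S2 : Type*) [AddCommGroup S1] [Module (ZMod p) S1] [Finite S1] [Nontrivial S1]
    [AddCommGroup S2] [Module (ZMod p) S2] [Finite S2] [Nontrivial S2]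
    (M1 : Presemifield p S1) (M2 : Presemifield p S2)
    (g1 g2 g3 : S1 ≃ₗ[ZMod p] S2)
    (hiso : ∀ x y : S1, M2.mul (g1 x) (g2 y) = g3 (M1.mul x y)) :
    rightNucleusSet M2.spread =
      (fun μ : S1 →ₗ[ZMod p] S1 =>
          (g3 : S1 →ₗ[ZMod p] S2) ∘ₗ μ ∘ₗ (g3.symm : S2 →ₗ[ZMod p] S1)) ''
        rightNucleusSet M1.spread ∧
    middleNucleusSet M2.spread =
      (fun μ : S1 →ₗ[ZMod p] S1 =>
          (g1 : S1 →ₗ[ZMod p] S2) ∘ₗ μ ∘ₗ (g1.symm : S2 →ₗ[ZMod p] S1)) ''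
        middleNucleusSet M1.spread ∧
    rightNucleusSet M2.dualSpread =
      (fun μ : S1 →ₗ[ZMod p] S1 =>
          (g3 : S1 →ₗ[ZMod p] S2) ∘ₗ μ ∘ₗ (g3.symm : S2 →ₗ[ZMod p] S1)) ''
        rightNucleusSet M1.dualSpread := by
  -- The spread set of `M2` is the conjugate of that of `M1` by `(g3, g1⁻¹)`.
  have hspread : M2.spread =
      (fun φ => (g3 : S1 →ₗ[ZMod p] S2) ∘ₗ φ ∘ₗ (g1.symm : S2 →ₗ[ZMod p] S1)) ''
        M1.spread := by
    ext φ
    constructor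
    · rintro ⟨y2, rfl⟩
      refine ⟨M1.mul.flip (g2.symm y2), ⟨g2.symm y2, rfl⟩, ?_⟩
      ext x
      have := hiso (g1.symm x) (g2.symm y2)
      simp only [LinearEquiv.apply_symm_apply] at this
      simpa [LinearMap.comp_apply] using this.symm
    · rintro ⟨ψ, ⟨y, rfl⟩, rfl⟩
      refine ⟨g2 y, ?_⟩
      ext x
      have := hiso (g1.symm x) y
      simp only [LinearEquiv.apply_symm_apply] at this
      simpa [LinearMap.comp_apply] using this
  -- The dual spread of `M2` is the conjugate of that of `M1` by `(g3, g2⁻¹)`.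
  have hdual : M2.dualSpread =
      (fun φ => (g3 : S1 →ₗ[ZMod p] S2) ∘ₗ φ ∘ₗ (g2.symm : S2 →ₗ[ZMod p] S1)) ''
        M1.dualSpread := by
    ext φ
    constructor
    · rintro ⟨x2, rfl⟩
      refine ⟨M1.mul (g1.symm x2), ⟨g1.symm x2, rfl⟩, ?_⟩
      ext y
      have := hiso (g1.symm x2) (g2.symm y)
      simp only [LinearEquiv.apply_symm_apply] at this
      simpa [LinearMap.comp_apply] using this.symm
    · rintro ⟨ψ, ⟨x, rfl⟩, rfl⟩
      refine ⟨g1 x, ?_⟩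
      ext y
      have := hiso x (g2.symm y)
      simp only [LinearEquiv.apply_symm_apply] at this
      simpa [LinearMap.comp_apply] using this
  refine ⟨?_, ?_, ?_⟩
  · rw [hspread, rightNucleusSet_conj g3 g1.symm]
  · rw [hspread, middleNucleusSet_conj g3 g1.symm, LinearEquiv.symm_symm]
  · rw [hdual, rightNucleusSet_conj g3 g2.symm]
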